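/- Let f(x) be the Hankel quartic form in four variables generated by v ∈ ℝ^{13} with v_0 = 0. If f(x) ≥ 0 for all x ∈ ℝ^4, then v_j = 0 for all j = 1, ..., 11, and hence f(x) = v_{12} x_4^4 with v_{12} ≥ 0. -/

import Mathlib

set_option maxHeartbeats 1600000

noncomputable def hankelForm (v : Fin 13 → ℝ) (x : Fin 4 → ℝ) : ℝ :=
  ∑ i1 : Fin 4, ∑ i2 : Fin 4, ∑ i3 : Fin 4, ∑ i4 : Fin 4,
    v ⟨i1.1 + i2.1 + i3.1 + i4.1, by omega⟩ * x i1 * x i2 * x i3 * x i4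

private lemma lemLin (B C : ℝ) (h : ∀ a : ℝ, 0 ≤ B * a + C) : B = 0 := by
  by_contra hB
  have h1 := h ((-C - 1) / B)
  have e : B * ((-C - 1) / B) = -C - 1 := by field_simp
  rw [e] at h1; linarith

private lemma lemQuad (A B C : ℝ) (h : ∀ a : ℝ, 0 ≤ A * a ^ 2 + B * a + C) : 0 ≤ A := by
  by_contra hA
  push_neg at hA
  have hApos : 0 < -A := by linarith
  have hnn : 0 ≤ (|C| + 1) / (-A) := div_nonneg (by positivity) hApos.le
  have hsq : (Real.sqrt ((|C| + 1) / (-A))) ^ 2 = (|C| + 1) / (-A) := Real.sq_sqrt hnn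
  set a := Real.sqrt ((|C| + 1) / (-A)) with ha
  have hAa : A * a ^ 2 = -(|C| + 1) := by
    rw [hsq, mul_div_assoc', div_eq_iff hApos.ne']; ring
  have h1 := h a
  have h2 := h (-a)
  have hC := le_abs_self C
  linarith [h1, h2, hAa, hC]

private lemma lemCubicNeg (A B C D : ℝ) (h : ∀ a : ℝ, 0 ≤ A * a ^ 3 + B * a ^ 2 + C * a + D) :
    ¬ A < 0 := by
  intro hA
  obtain ⟨M, hM⟩ : ∃ M : ℝ, M = (|B| + |C| + |D| + 1) / (-A) + 1 := ⟨_, rfl⟩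
  have hApos : 0 < -A := by linarith
  have hnn : 0 ≤ (|B| + |C| + |D| + 1) / (-A) := div_nonneg (by positivity) hApos.le
  have hM1 : 1 ≤ M := by rw [hM]; linarith
  have hkey : (-A) * M = |B| + |C| + |D| + 1 + (-A) := by
    rw [hM, mul_add, mul_div_assoc', mul_comm (-A), mul_div_assoc, div_self hApos.ne']; ring
  have hk2 : ((-A) * M) * M ^ 2 = (|B| + |C| + |D| + 1 + (-A)) * M ^ 2 := by rw [hkey]
  have f1 := h M
  have f3 : B * M ^ 2 ≤ |B| * M ^ 2 :=
    mul_le_mul_of_nonneg_right (le_abs_self B) (sq_nonneg M)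
  have f4 : C * M ≤ |C| * M :=
    mul_le_mul_of_nonneg_right (le_abs_self C) (by linarith)
  have hM2 : 0 ≤ M ^ 2 - 1 := by
    nlinarith [mul_nonneg (show (0:ℝ) ≤ M - 1 by linarith) (show (0:ℝ) ≤ M + 1 by linarith)]
  have f5 : |C| * M ≤ |C| * M ^ 2 := by
    nlinarith [mul_nonneg (abs_nonneg C) (mul_nonneg (show (0:ℝ) ≤ M by linarith) (show (0:ℝ) ≤ M - 1 by linarith))]
  have f6 : D ≤ |D| := le_abs_self D
  have f7 : |D| ≤ |D| * M ^ 2 := by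
    nlinarith [mul_nonneg (abs_nonneg D) hM2]
  have f8 : 0 ≤ (1 - A) * (M ^ 2 - 1) := mul_nonneg (by linarith) hM2
  linarith [f1, hk2, f3, f4, f5, f6, f7, f8]

private lemma lemCubic (A B C D : ℝ) (h : ∀ a : ℝ, 0 ≤ A * a ^ 3 + B * a ^ 2 + C * a + D) :
    A = 0 := by
  rcases lt_trichotomy A 0 with hA | hA | hA
  · exact absurd hA (lemCubicNeg A B C D h)
  · exact hA
  · exfalso
    have h' : ∀ a : ℝ, 0 ≤ (-A) * a ^ 3 + B * a ^ 2 + (-C) * a + D := by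
      intro a
      have e : (-A) * a ^ 3 + B * a ^ 2 + (-C) * a + D
          = A * (-a) ^ 3 + B * (-a) ^ 2 + C * (-a) + D := by ring
      rw [e]; exact h (-a)
    exact lemCubicNeg (-A) B (-C) D h' (by linarith)

theorem stmt5 (v : Fin 13 → ℝ) (h0 : v 0 = 0)
    (hpsd : ∀ x : Fin 4 → ℝ, 0 ≤ hankelForm v x) :
    (∀ j : Fin 13, 1 ≤ j.1 → j.1 ≤ 11 → v j = 0) ∧
    (∀ x : Fin 4 → ℝ, hankelForm v x = v 12 * (x 3) ^ 4) ∧ 0 ≤ v 12 := by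
  have hexp : ∀ x : Fin 4 → ℝ, hankelForm v x =
      v 0 * (x 0)^4
    + 4*(v 1*(x 1) + v 2*(x 2) + v 3*(x 3)) * (x 0)^3
    + 6*(v 2*(x 1)^2 + 2*v 3*(x 1)*(x 2) + 2*v 4*(x 1)*(x 3) + v 4*(x 2)^2 + 2*v 5*(x 2)*(x 3) + v 6*(x 3)^2) * (x 0)^2
    + 4*(v 3*(x 1)^3 + 3*v 4*(x 1)^2*(x 2) + 3*v 5*(x 1)^2*(x 3) + 3*v 5*(x 1)*(x 2)^2 + 6*v 6*(x 1)*(x 2)*(x 3)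
        + 3*v 7*(x 1)*(x 3)^2 + v 6*(x 2)^3 + 3*v 7*(x 2)^2*(x 3) + 3*v 8*(x 2)*(x 3)^2 + v 9*(x 3)^3) * (x 0)
    + (v 4*(x 1)^4 + 4*v 5*(x 1)^3*(x 2) + 4*v 6*(x 1)^3*(x 3) + 6*v 6*(x 1)^2*(x 2)^2 + 12*v 7*(x 1)^2*(x 2)*(x 3)
        + 6*v 8*(x 1)^2*(x 3)^2 + 4*v 7*(x 1)*(x 2)^3 + 12*v 8*(x 1)*(x 2)^2*(x 3) + 12*v 9*(x 1)*(x 2)*(x 3)^2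
        + 4*v 10*(x 1)*(x 3)^3 + v 8*(x 2)^4 + 4*v 9*(x 2)^3*(x 3) + 6*v 10*(x 2)^2*(x 3)^2 + 4*v 11*(x 2)*(x 3)^3
        + v 12*(x 3)^4) := by
    intro x
    have h3 : ((3:Fin 4):ℕ) = 3 := rfl
    simp only [hankelForm, Fin.sum_univ_four, h3, Fin.isValue]
    norm_num
    simp only [
      show ((⟨2, by norm_num⟩ : Fin 13)) = 2 from rfl,
      show ((⟨3, by norm_num⟩ : Fin 13)) = 3 from rfl,
      show ((⟨4, by norm_num⟩ : Fin 13)) = 4 from rfl,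
      show ((⟨5, by norm_num⟩ : Fin 13)) = 5 from rfl,
      show ((⟨6, by norm_num⟩ : Fin 13)) = 6 from rfl,
      show ((⟨7, by norm_num⟩ : Fin 13)) = 7 from rfl,
      show ((⟨8, by norm_num⟩ : Fin 13)) = 8 from rfl,
      show ((⟨9, by norm_num⟩ : Fin 13)) = 9 from rfl,
      show ((⟨10, by norm_num⟩ : Fin 13)) = 10 from rfl,
      show ((⟨11, by norm_num⟩ : Fin 13)) = 11 from rfl,
      show ((⟨12, by norm_num⟩ : Fin 13)) = 12 from rfl]
    ring
  have hq : ∀ a b c d : ℝ, 0 ≤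
      v 0 * a^4
    + 4*(v 1*b + v 2*c + v 3*d) * a^3
    + 6*(v 2*b^2 + 2*v 3*b*c + 2*v 4*b*d + v 4*c^2 + 2*v 5*c*d + v 6*d^2) * a^2
    + 4*(v 3*b^3 + 3*v 4*b^2*c + 3*v 5*b^2*d + 3*v 5*b*c^2 + 6*v 6*b*c*d
        + 3*v 7*b*d^2 + v 6*c^3 + 3*v 7*c^2*d + 3*v 8*c*d^2 + v 9*d^3) * a
    + (v 4*b^4 + 4*v 5*b^3*c + 4*v 6*b^3*d + 6*v 6*b^2*c^2 + 12*v 7*b^2*c*d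
        + 6*v 8*b^2*d^2 + 4*v 7*b*c^3 + 12*v 8*b*c^2*d + 12*v 9*b*c*d^2
        + 4*v 10*b*d^3 + v 8*c^4 + 4*v 9*c^3*d + 6*v 10*c^2*d^2 + 4*v 11*c*d^3
        + v 12*d^4) := by
    intro a b c d
    have H := hpsd ![a, b, c, d]
    rw [hexp] at H
    simpa using H
  -- Step 1: v1 = v2 = v3 = 0
  have hlinslope : ∀ b c d : ℝ, v 1 * b + v 2 * c + v 3 * d = 0 := by
    intro b c d
    have h4 := lemCubic (4*(v 1*b + v 2*c + v 3*d))
      (6*(v 2*b^2 + 2*v 3*b*c + 2*v 4*b*d + v 4*c^2 + 2*v 5*c*d + v 6*d^2))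
      (4*(v 3*b^3 + 3*v 4*b^2*c + 3*v 5*b^2*d + 3*v 5*b*c^2 + 6*v 6*b*c*d
        + 3*v 7*b*d^2 + v 6*c^3 + 3*v 7*c^2*d + 3*v 8*c*d^2 + v 9*d^3))
      (v 4*b^4 + 4*v 5*b^3*c + 4*v 6*b^3*d + 6*v 6*b^2*c^2 + 12*v 7*b^2*c*d
        + 6*v 8*b^2*d^2 + 4*v 7*b*c^3 + 12*v 8*b*c^2*d + 12*v 9*b*c*d^2
        + 4*v 10*b*d^3 + v 8*c^4 + 4*v 9*c^3*d + 6*v 10*c^2*d^2 + 4*v 11*c*d^3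
        + v 12*d^4)
      (fun a => by have := hq a b c d; rw [h0] at this; linarith [this])
    linarith
  have e1 : v 1 = 0 := by have := hlinslope 1 0 0; linarith
  have e2 : v 2 = 0 := by have := hlinslope 0 1 0; linarith
  have e3 : v 3 = 0 := by have := hlinslope 0 0 1; linarith
  -- Step 2: 0 ≤ 2 v4 b d + v4 c^2 + 2 v5 c d + v6 d^2
  have hQ2 : ∀ b c d : ℝ, 0 ≤ 2*v 4*b*d + v 4*c^2 + 2*v 5*c*d + v 6*d^2 := by
    intro b c d
    have h4 := lemQuad (6*(2*v 4*b*d + v 4*c^2 + 2*v 5*c*d + v 6*d^2))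
      (4*(3*v 4*b^2*c + 3*v 5*b^2*d + 3*v 5*b*c^2 + 6*v 6*b*c*d
        + 3*v 7*b*d^2 + v 6*c^3 + 3*v 7*c^2*d + 3*v 8*c*d^2 + v 9*d^3))
      (v 4*b^4 + 4*v 5*b^3*c + 4*v 6*b^3*d + 6*v 6*b^2*c^2 + 12*v 7*b^2*c*d
        + 6*v 8*b^2*d^2 + 4*v 7*b*c^3 + 12*v 8*b*c^2*d + 12*v 9*b*c*d^2
        + 4*v 10*b*d^3 + v 8*c^4 + 4*v 9*c^3*d + 6*v 10*c^2*d^2 + 4*v 11*c*d^3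
        + v 12*d^4)
      (fun a => by have := hq a b c d; rw [h0, e1, e2, e3] at this; linarith [this])
    linarith
  have e4 : v 4 = 0 := by
    have hl := lemLin (2*v 4) (v 6) (fun b => by linarith [hQ2 b 0 1])
    linarith
  have e5 : v 5 = 0 := by
    have hl := lemLin (2*v 5) (v 6) (fun c => by linarith [hQ2 0 c 1, mul_eq_zero_of_left e4 (c^2)])
    linarith
  -- Step 3: v6 = 0
  have e6 : v 6 = 0 := by
    have hl := lemLin (4*v 6) (v 8) (fun a => by
      have := hq a 0 1 0
      rw [h0, e1, e2, e3, e4, e5] at this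
      linarith [this])
    linarith
  -- Step 4: the a-slope vanishes
  have hQ3 : ∀ b c d : ℝ, 3*v 7*b*d^2 + 3*v 7*c^2*d + 3*v 8*c*d^2 + v 9*d^3 = 0 := by
    intro b c d
    have hl := lemLin (4*(3*v 7*b*d^2 + 3*v 7*c^2*d + 3*v 8*c*d^2 + v 9*d^3))
      (12*v 7*b^2*c*d + 6*v 8*b^2*d^2 + 4*v 7*b*c^3 + 12*v 8*b*c^2*d + 12*v 9*b*c*d^2
        + 4*v 10*b*d^3 + v 8*c^4 + 4*v 9*c^3*d + 6*v 10*c^2*d^2 + 4*v 11*c*d^3 + v 12*d^4)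
      (fun a => by
        have := hq a b c d
        rw [h0, e1, e2, e3, e4, e5, e6] at this
        linarith [this])
    linarith
  have e9 : v 9 = 0 := by have := hQ3 0 0 1; linarith
  have e7 : v 7 = 0 := by have := hQ3 1 0 1; linarith
  have e8 : v 8 = 0 := by have := hQ3 0 1 1; linarith
  -- Step 5: remaining quartic part
  have hQ4 : ∀ b c : ℝ, 0 ≤ 4*v 10*b + 6*v 10*c^2 + 4*v 11*c + v 12 := by
    intro b c
    have := hq 0 b c 1
    rw [h0, e1, e2, e3, e4, e5, e6, e7, e8, e9] at this
    linarith [this]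
  have e10 : v 10 = 0 := by
    have hl := lemLin (4*v 10) (v 12) (fun b => by linarith [hQ4 b 0])
    linarith
  have e11 : v 11 = 0 := by
    have hl := lemLin (4*v 11) (v 12) (fun c => by linarith [hQ4 0 c, mul_eq_zero_of_left e10 (c^2)])
    linarith
  have e12 : 0 ≤ v 12 := by linarith [hQ4 0 0]
  refine ⟨?_, ?_, e12⟩
  · intro j hj1 hj2
    fin_cases j <;> simp_all <;>
      first
      | exact e1 | exact e2 | exact e3 | exact e4 | exact e5 | exact e6
      | exact e7 | exact e8 | exact e9 | exact e10 | exact e11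
  · intro x
    rw [hexp x, h0, e1, e2, e3, e4, e5, e6, e7, e8, e9, e10, e11]
    ring
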